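/- Let E be a ring and d ∈ H(E) a square-zero element of the Hurwitz series ring with shift derivation j. Suppose there exists γ ∈ H(E) with j(d) = d*γ - γ*d. Then there exists an invertible φ ∈ H(E) with constant term 1 satisfying j(φ) = φ*γ, and the conjugate d' = φ*d*φ^{-1} satisfies j(d') = 0 (i.e., d' is a constant sequence (d'_0, 0, 0, ...)). -/

import Mathlib

/-- Hurwitz (binomial) convolution of sequences. -/
def hmul {E : Type*} [Ring E] (f g : ℕ → E) : ℕ → E :=
  fun n => ∑ i ∈ Finset.range (n + 1), (n.choose i) • (f i * g (n - i))

/-- The identity of the Hurwitz series ring. -/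
def hone {E : Type*} [Ring E] : ℕ → E := fun n => if n = 0 then 1 else 0

/-- The shift operator. -/
def jop {E : Type*} (f : ℕ → E) : ℕ → E := fun n => f (n + 1)

section Aux
variable {E : Type*} [Ring E]

lemma hone_hmul (f : ℕ → E) : hmul hone f = f := by
  funext n
  simp only [hmul, hone]
  rw [Finset.sum_eq_single 0]
  · simp
  · intro i _ hi; simp [hi]
  · simp

lemma hmul_hone (f : ℕ → E) : hmul f hone = f := by
  funext n
  simp only [hmul, hone]
  rw [Finset.sum_eq_single n]
  · simp
  · intro i hi hne
    have : n - i ≠ 0 := by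
      have := Finset.mem_range.mp hi
      omega
    simp [this]
  · simp

lemma hmul_sub (f g h : ℕ → E) : hmul f (g - h) = hmul f g - hmul f h := by
  funext n
  simp [hmul, mul_sub, smul_sub, Finset.sum_sub_distrib]

lemma sub_hmul (f g h : ℕ → E) : hmul (f - g) h = hmul f h - hmul g h := by
  funext n
  simp [hmul, sub_mul, smul_sub, Finset.sum_sub_distrib]

lemma hmul_neg (f g : ℕ → E) : hmul f (-g) = -hmul f g := by
  funext n; simp [hmul]

lemma neg_hmul (f g : ℕ → E) : hmul (-f) g = -hmul f g := by
  funext n; simp [hmul]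

lemma hmul_assoc (f g h : ℕ → E) : hmul (hmul f g) h = hmul f (hmul g h) := by
  funext n
  simp only [hmul, Finset.sum_mul, Finset.mul_sum, Finset.smul_sum, smul_mul_assoc,
    mul_smul_comm, smul_smul]
  rw [Finset.sum_sigma', Finset.sum_sigma']
  refine Finset.sum_nbij' (fun p => ⟨p.2, p.1 - p.2⟩) (fun p => ⟨p.1 + p.2, p.1⟩)
    ?_ ?_ ?_ ?_ ?_
  · rintro ⟨i, j⟩ hp
    simp only [Finset.mem_sigma, Finset.mem_range] at hp ⊢
    omega
  · rintro ⟨j, k⟩ hp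
    simp only [Finset.mem_sigma, Finset.mem_range] at hp ⊢
    omega
  · rintro ⟨i, j⟩ hp
    simp only [Finset.mem_sigma, Finset.mem_range] at hp
    simp only [Sigma.mk.inj_iff]
    constructor
    · omega
    · exact heq_of_eq (by omega)
  · rintro ⟨j, k⟩ hp
    simp only [Finset.mem_sigma, Finset.mem_range] at hp
    simp only [Sigma.mk.inj_iff]
    exact ⟨trivial, heq_of_eq (by omega)⟩
  · rintro ⟨i, j⟩ hp
    simp only [Finset.mem_sigma, Finset.mem_range] at hp
    have h1 : j ≤ i := by omega
    have h2 : i ≤ n := by omega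
    have hc : n.choose i * i.choose j = n.choose j * (n - j).choose (i - j) :=
      Nat.choose_mul (n := n) h1
    have h3 : n - i = n - j - (i - j) := by omega
    rw [hc, h3, mul_assoc]

lemma jop_hone : jop (hone : ℕ → E) = 0 := by
  funext n; simp [jop, hone]

lemma jop_hmul (f g : ℕ → E) : jop (hmul f g) = hmul (jop f) g + hmul f (jop g) := by
  funext n
  simp only [jop, hmul, Pi.add_apply]
  rw [Finset.sum_range_succ']
  have key : ∀ i ∈ Finset.range (n + 1),
      (n + 1).choose (i + 1) • (f (i + 1) * g (n + 1 - (i + 1))) =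
      n.choose i • (f (i + 1) * g (n - i)) + n.choose (i + 1) • (f (i + 1) * g (n - i)) := by
    intro i _
    have h : n + 1 - (i + 1) = n - i := by omega
    rw [h, Nat.choose_succ_succ, add_smul]
  rw [Finset.sum_congr rfl key, Finset.sum_add_distrib]
  have h1 : ∑ i ∈ Finset.range (n + 1), n.choose (i + 1) • (f (i + 1) * g (n - i)) +
      (n + 1).choose 0 • (f 0 * g (n + 1 - 0)) =
      ∑ i ∈ Finset.range (n + 1), n.choose i • (f i * g (n - i + 1)) := by
    conv_rhs => rw [Finset.sum_range_succ']
    congr 1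
    · rw [Finset.sum_range_succ]
      simp only [Nat.choose_succ_self, zero_smul, add_zero]
      apply Finset.sum_congr rfl
      intro i hi
      have : i < n := Finset.mem_range.mp hi
      have h2 : n - (i + 1) + 1 = n - i := by omega
      rw [h2]
    · simp
  rw [add_assoc, h1]

lemma add_hmul (f g h : ℕ → E) : hmul (f + g) h = hmul f h + hmul g h := by
  funext n
  simp [hmul, add_mul, smul_add, Finset.sum_add_distrib]

def phiAux (γ : ℕ → E) : ℕ → E
  | 0 => 1
  | n + 1 => ∑ i ∈ (Finset.range (n + 1)).attach, n.choose i.1 • (phiAux γ i.1 * γ (n - i.1))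
decreasing_by exact Finset.mem_range.mp i.2

def psiAux (γ : ℕ → E) : ℕ → E
  | 0 => 1
  | n + 1 => -∑ i ∈ (Finset.range (n + 1)).attach,
      (n + 1).choose i.1 • (psiAux γ i.1 * phiAux γ (n + 1 - i.1))
decreasing_by exact Finset.mem_range.mp i.2

def chiAux (γ : ℕ → E) : ℕ → E
  | 0 => 1
  | n + 1 => -∑ i ∈ (Finset.range (n + 1)).attach,
      (n + 1).choose (i.1 + 1) • (phiAux γ (i.1 + 1) * chiAux γ (n - i.1))
decreasing_by exact Nat.lt_succ_of_le (Nat.sub_le n i.1)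

lemma phiAux_zero (γ : ℕ → E) : phiAux γ 0 = 1 := by rw [phiAux]

lemma jop_phiAux (γ : ℕ → E) : jop (phiAux γ) = hmul (phiAux γ) γ := by
  funext n
  show phiAux γ (n + 1) = _
  rw [phiAux, Finset.sum_attach (Finset.range (n + 1))
    (fun i => n.choose i • (phiAux γ i * γ (n - i)))]
  rfl

lemma psiAux_phiAux (γ : ℕ → E) : hmul (psiAux γ) (phiAux γ) = hone := by
  funext n
  cases n with
  | zero => simp [hmul, hone, psiAux, phiAux]
  | succ n =>
    show ∑ i ∈ Finset.range (n + 2), (n + 1).choose i • (psiAux γ i * phiAux γ (n + 1 - i)) =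
      hone (n + 1)
    rw [Finset.sum_range_succ]
    have : psiAux γ (n + 1) = -∑ i ∈ Finset.range (n + 1),
        (n + 1).choose i • (psiAux γ i * phiAux γ (n + 1 - i)) := by
      rw [psiAux, Finset.sum_attach (Finset.range (n + 1))
        (fun i => (n + 1).choose i • (psiAux γ i * phiAux γ (n + 1 - i)))]
    simp [this, phiAux_zero, hone]

lemma phiAux_chiAux (γ : ℕ → E) : hmul (phiAux γ) (chiAux γ) = hone := by
  funext n
  cases n with
  | zero => simp [hmul, hone, chiAux, phiAux_zero]
  | succ n =>
    show ∑ i ∈ Finset.range (n + 2), (n + 1).choose i • (phiAux γ i * chiAux γ (n + 1 - i)) =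
      hone (n + 1)
    rw [Finset.sum_range_succ']
    have : chiAux γ (n + 1) = -∑ i ∈ Finset.range (n + 1),
        (n + 1).choose (i + 1) • (phiAux γ (i + 1) * chiAux γ (n - i)) := by
      rw [chiAux, Finset.sum_attach (Finset.range (n + 1))
        (fun i => (n + 1).choose (i + 1) • (phiAux γ (i + 1) * chiAux γ (n - i)))]
    have h2 : ∀ i, n + 1 - (i + 1) = n - i := fun i => by omega
    simp only [h2, Nat.choose_zero_right, one_smul, Nat.sub_zero, phiAux_zero, one_mul]
    rw [this]
    simp [hone]

end Aux

/-- If `d` is square-zero in the Hurwitz series ring and `j(d) = d*γ - γ*d` for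
some `γ`, then there is an invertible `φ` with constant term `1` satisfying
`j(φ) = φ*γ`, and the conjugate `d' = φ*d*φ⁻¹` satisfies `j(d') = 0`. -/
theorem hurwitz_lifting {E : Type*} [Ring E] (d γ : ℕ → E)
    (hd : hmul d d = 0)
    (hγ : jop d = hmul d γ - hmul γ d) :
    ∃ φ ψ : ℕ → E,
      hmul φ ψ = hone ∧ hmul ψ φ = hone ∧
      φ 0 = 1 ∧ jop φ = hmul φ γ ∧
      jop (hmul (hmul φ d) ψ) = 0 := by
  set φ := phiAux γ with hφdef
  set ψ := psiAux γ with hψdef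
  set χ := chiAux γ with hχdef
  have hψφ : hmul ψ φ = hone := psiAux_phiAux γ
  have hφχ : hmul φ χ = hone := phiAux_chiAux γ
  have hψχ : ψ = χ := by
    calc ψ = hmul ψ hone := (hmul_hone ψ).symm
      _ = hmul ψ (hmul φ χ) := by rw [hφχ]
      _ = hmul (hmul ψ φ) χ := (hmul_assoc ψ φ χ).symm
      _ = χ := by rw [hψφ, hone_hmul]
  have hφψ : hmul φ ψ = hone := by rw [hψχ]; exact hφχ
  have hjφ : jop φ = hmul φ γ := jop_phiAux γ
  have hjψ : jop ψ = -hmul γ ψ := by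
    have h0 : hmul (jop φ) ψ + hmul φ (jop ψ) = 0 := by
      rw [← jop_hmul, hφψ, jop_hone]
    have h1 : hmul φ (jop ψ) = -hmul (hmul φ γ) ψ := by
      rw [← hjφ]; linear_combination (norm := abel) h0
    calc jop ψ = hmul hone (jop ψ) := (hone_hmul _).symm
      _ = hmul (hmul ψ φ) (jop ψ) := by rw [hψφ]
      _ = hmul ψ (hmul φ (jop ψ)) := hmul_assoc ψ φ _
      _ = hmul ψ (-(hmul (hmul φ γ) ψ)) := by rw [h1]
      _ = -hmul ψ (hmul (hmul φ γ) ψ) := hmul_neg _ _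
      _ = -hmul γ ψ := by
          rw [← hmul_assoc ψ (hmul φ γ) ψ, ← hmul_assoc ψ φ γ, hψφ, hone_hmul]
  refine ⟨φ, ψ, hφψ, hψφ, phiAux_zero γ, hjφ, ?_⟩
  rw [jop_hmul, jop_hmul, hjφ, hjψ, hγ, hmul_sub, hmul_neg, add_hmul, sub_hmul]
  simp only [hmul_assoc]
  abel
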